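/- Let q be a prime power, let b(x) be a polynomial of degree m ≥ 1 that is irreducible over the finite field F_q, and let α be a root of b(x) in the extension field F_{q^m}. For any positive integer d, the polynomial b(x^d) is irreducible over F_q if and only if the polynomial x^d − α is irreducible over F_{q^m}. -/

import Mathlib

open Polynomial Module IntermediateField

lemma aux (F K Ω : Type*) [Field F] [Field K] [Field Ω] [Algebra F K] [Algebra K Ω]
    [Algebra F Ω] [IsScalarTower F K Ω] [FiniteDimensional F K]
    (α : K) (hgen : Algebra.adjoin F {α} = ⊤) (β : Ω) (d : ℕ) (hd : 1 ≤ d)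
    (hβ : β ^ d = algebraMap K Ω α) :
    (minpoly F β).natDegree = finrank F K * (minpoly K β).natDegree := by
  have hintK : IsIntegral K β := by
    refine ⟨X ^ d - C α, monic_X_pow_sub_C α (by omega), ?_⟩
    simp [eval₂_sub, hβ]
  have : Algebra.IsIntegral F K := Algebra.IsIntegral.of_finite F K
  have hintF : IsIntegral F β := isIntegral_trans β hintK
  have hrange : ∀ x : K, algebraMap K Ω x ∈ F⟮β⟯ := by
    intro x
    have hx : x ∈ Algebra.adjoin F ({α} : Set K) := hgen ▸ Algebra.mem_top
    have hmap : algebraMap K Ω x ∈ (Algebra.adjoin F ({α} : Set K)).map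
        (IsScalarTower.toAlgHom F K Ω) := ⟨x, hx, rfl⟩
    rw [AlgHom.map_adjoin] at hmap
    have himg : (IsScalarTower.toAlgHom F K Ω) '' {α} = {β ^ d} := by
      simp [Set.image_singleton, hβ]
    rw [himg] at hmap
    have hle : Algebra.adjoin F ({β ^ d} : Set Ω) ≤ F⟮β⟯.toSubalgebra := by
      apply Algebra.adjoin_le
      simp only [Set.singleton_subset_iff, SetLike.mem_coe]
      exact pow_mem (mem_adjoin_simple_self F β) d
    exact hle hmap
  have hEq : IntermediateField.restrictScalars F K⟮β⟯ = F⟮β⟯ := by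
    apply le_antisymm
    · intro x hx
      have : K⟮β⟯ ≤ Subfield.toIntermediateField F⟮β⟯.toSubfield hrange := by
        rw [adjoin_le_iff]
        simp only [Set.singleton_subset_iff]
        exact mem_adjoin_simple_self F β
      exact this hx
    · rw [adjoin_le_iff]
      simp only [Set.singleton_subset_iff]
      exact mem_adjoin_simple_self K β
  rw [← IntermediateField.adjoin.finrank hintF, ← IntermediateField.adjoin.finrank hintK,
    ← hEq]
  exact (Module.finrank_mul_finrank F K ↥K⟮β⟯).symm

theorem stmt_1 (q m d : ℕ) (hq : IsPrimePow q) (hm : 1 ≤ m) (hd : 1 ≤ d)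
    (F K : Type) [Field F] [Fintype F] [Field K] [Fintype K] [Algebra F K]
    (hF : Fintype.card F = q) (hK : Fintype.card K = q ^ m)
    (b : Polynomial F) (hbdeg : b.natDegree = m) (hbirr : Irreducible b)
    (α : K) (hα : Polynomial.aeval α b = 0) :
    Irreducible (b.comp (X ^ d)) ↔ Irreducible (X ^ d - C α : Polynomial K) := by
  have hfd : FiniteDimensional F K := inferInstance
  have hfin : finrank F K = m := by
    have h := card_eq_pow_finrank (K := F) (V := K)
    rw [hF, hK] at h
    exact Nat.pow_right_injective hq.two_le h.symm
  have hb0 : b ≠ 0 := fun h => by simp [h] at hbdeg; omega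
  have hintα : IsIntegral F α := IsIntegral.of_finite F α
  have hmαdvd : minpoly F α ∣ b := minpoly.dvd F α hα
  have hassoc : Associated (minpoly F α) b :=
    (minpoly.irreducible hintα).associated_of_dvd hbirr hmαdvd
  have hmαdeg : (minpoly F α).natDegree = m := by
    rw [natDegree_eq_of_degree_eq (degree_eq_degree_of_associated hassoc), hbdeg]
  -- α generates K over F
  have hgen : Algebra.adjoin F ({α} : Set K) = ⊤ := by
    have h1 : F⟮α⟯ = (⊤ : IntermediateField F K) := by
      have h2 : finrank F ↥F⟮α⟯ = finrank F K := by
        rw [IntermediateField.adjoin.finrank hintα, hmαdeg, hfin]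
      have h3 : F⟮α⟯.toSubmodule = ⊤ := Submodule.eq_top_of_finrank_eq h2
      apply IntermediateField.toSubalgebra_injective
      apply Subalgebra.toSubmodule_injective
      simpa using h3
    have := congrArg IntermediateField.toSubalgebra h1
    rwa [IntermediateField.adjoin_simple_toSubalgebra_of_isAlgebraic hintα.isAlgebraic,
      IntermediateField.top_toSubalgebra] at this
  -- setup of the algebraic closure
  set Ω := AlgebraicClosure K with hΩ
  set α' : Ω := algebraMap K Ω α with hα'
  -- the polynomial X^d - C α' has a root β in Ω
  obtain ⟨β, hβroot⟩ : ∃ β : Ω, (X ^ d - C α').IsRoot β := by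
    apply IsAlgClosed.exists_root
    rw [degree_X_pow_sub_C (by omega) α']
    exact_mod_cast Nat.pos_iff_ne_zero.mp (by omega)
  have hβ : β ^ d = α' := by
    have := hβroot
    simp only [IsRoot, eval_sub, eval_pow, eval_X, eval_C, sub_eq_zero] at this
    exact this
  have hcompdeg : (b.comp (X ^ d : Polynomial F)).natDegree = m * d := by
    rw [natDegree_comp, natDegree_X_pow, hbdeg]
  have hcomp0 : b.comp (X ^ d : Polynomial F) ≠ 0 := fun h => by
    have := congrArg natDegree h
    rw [hcompdeg] at this
    simp at this
    omega
  -- β is a root of b.comp (X^d) over F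
  have haevalβ : aeval β (b.comp (X ^ d : Polynomial F)) = 0 := by
    rw [aeval_comp]
    simp only [map_pow, aeval_X]
    rw [hβ, hα', aeval_algebraMap_apply, hα, map_zero]
  have hdvdF : minpoly F β ∣ b.comp (X ^ d) := minpoly.dvd F β haevalβ
  have hintK : IsIntegral K β := by
    refine ⟨X ^ d - C α, monic_X_pow_sub_C α (by omega), ?_⟩
    have : eval₂ (algebraMap K Ω) β (X ^ d - C α) = β ^ d - α' := by
      simp [hα']
    rw [this, hβ, sub_self]
  have : Algebra.IsIntegral F K := Algebra.IsIntegral.of_finite F K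
  have hintF : IsIntegral F β := isIntegral_trans β hintK
  have hdegeq := aux F K Ω α hgen β d hd hβ
  rw [hfin] at hdegeq
  have haevalK : aeval β (X ^ d - C α : Polynomial K) = 0 := by
    rw [map_sub, map_pow, aeval_X, aeval_C, hβ, hα', sub_self]
  have hdvdK : minpoly K β ∣ (X ^ d - C α) := minpoly.dvd K β haevalK
  constructor
  · intro h
    -- minpoly F β is associated to b.comp (X^d), so has degree m*d
    have hassoc2 : Associated (minpoly F β) (b.comp (X ^ d)) :=
      (minpoly.irreducible hintF).associated_of_dvd h hdvdF
    have hdeg2 : (minpoly F β).natDegree = m * d := by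
      rw [natDegree_eq_of_degree_eq (degree_eq_degree_of_associated hassoc2), hcompdeg]
    have hdegK : (minpoly K β).natDegree = d := by
      rw [hdeg2] at hdegeq
      exact (Nat.eq_of_mul_eq_mul_left (by omega) hdegeq.symm)
    -- X^d - C α = minpoly K β
    have heq : X ^ d - C α = minpoly K β := by
      obtain ⟨c, hc⟩ := hdvdK
      have hmp0 : minpoly K β ≠ 0 := minpoly.ne_zero hintK
      have hq0 : (X ^ d - C α : Polynomial K) ≠ 0 :=
        (monic_X_pow_sub_C α (by omega)).ne_zero
      have hc0 : c ≠ 0 := fun h => by rw [h, mul_zero] at hc; exact hq0 hc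
      have hcd : c.natDegree = 0 := by
        have := congrArg natDegree hc
        rw [natDegree_mul hmp0 hc0, natDegree_X_pow_sub_C, hdegK] at this
        omega
      have hlc : c = 1 := by
        have hmonic : ((minpoly K β) * c).Monic := hc ▸ monic_X_pow_sub_C α (by omega)
        have h5 : ((minpoly K β) * c).leadingCoeff = 1 := hmonic
        rw [leadingCoeff_mul, (minpoly.monic hintK).leadingCoeff, one_mul] at h5
        have hcm : c.Monic := h5
        exact hcm.natDegree_eq_zero.mp hcd
      rw [hc, hlc, mul_one]
    rw [heq]
    exact minpoly.irreducible hintK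
  · intro h
    have heqK : minpoly K β = X ^ d - C α :=
      (minpoly.eq_of_irreducible_of_monic h haevalK (monic_X_pow_sub_C α (by omega))).symm
    have hdegF : (minpoly F β).natDegree = m * d := by
      rw [hdegeq, heqK, natDegree_X_pow_sub_C]
    -- b.comp (X^d) is a unit multiple of minpoly F β
    obtain ⟨c, hc⟩ := hdvdF
    have hmp0 : minpoly F β ≠ 0 := minpoly.ne_zero hintF
    have hc0 : c ≠ 0 := fun h' => by rw [h', mul_zero] at hc; exact hcomp0 hc
    have hcd : c.natDegree = 0 := by
      have := congrArg natDegree hc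
      rw [natDegree_mul hmp0 hc0, hcompdeg, hdegF] at this
      omega
    have hcu : IsUnit c := by
      rw [eq_C_of_natDegree_eq_zero hcd]
      apply isUnit_C.mpr
      apply IsUnit.mk0
      intro h'
      rw [eq_C_of_natDegree_eq_zero hcd, h', map_zero] at hc0
      exact hc0 rfl
    have : Associated (minpoly F β) (b.comp (X ^ d)) := ⟨hcu.unit, by rw [hc]; rfl⟩
    exact this.irreducible (minpoly.irreducible hintF)
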